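/- Let Z be a nonnegative random variable with E[Z] < ∞. Then the function t ↦ E[{Z/t}] (where {·} denotes the fractional part) is square integrable on (0,∞), and in fact ∫₀^∞ (E[{Z/t}])² dt ≤ E[Z] · ∫₀^∞ {1/t}² dt. -/

import Mathlib

open MeasureTheory Set

lemma fract_sq_meas : Measurable (fun t : ℝ => Int.fract (1 / t) ^ 2) :=
  ((measurable_const.div measurable_id).fract).pow_const 2

lemma Cint : IntegrableOn (fun t : ℝ => Int.fract (1 / t) ^ 2) (Ioi 0) := by
  rw [← Ioc_union_Ioi_eq_Ioi (zero_le_one' ℝ)]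
  refine IntegrableOn.union ?_ ?_
  · refine (integrable_const (1 : ℝ)).mono' fract_sq_meas.aestronglyMeasurable ?_
    refine Filter.Eventually.of_forall fun t => ?_
    rw [Real.norm_eq_abs, abs_of_nonneg (by positivity)]
    nlinarith [Int.fract_nonneg (1/t), Int.fract_lt_one (1/t)]
  · refine (integrableOn_Ioi_rpow_of_lt (by norm_num : (-2:ℝ) < -1) one_pos).congr_fun ?_
      measurableSet_Ioi
    intro t ht
    have ht1 : (1:ℝ) < t := ht
    have h0 : (0:ℝ) < t := by linarith
    have : Int.fract (1 / t) = 1 / t :=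
      Int.fract_eq_self.2 ⟨by positivity, by rw [div_lt_one h0]; exact ht1⟩
    simp only [this, div_pow, one_pow, Real.rpow_neg h0.le, ← Real.rpow_natCast t 2]
    norm_num

lemma scale {z : ℝ} (hz : 0 < z) :
    IntegrableOn (fun t : ℝ => Int.fract (z / t) ^ 2) (Ioi 0) ∧
    ∫ t in Ioi (0:ℝ), Int.fract (z / t) ^ 2
      = z * ∫ t in Ioi (0:ℝ), Int.fract (1 / t) ^ 2 := by
  have key : ∀ t : ℝ, Int.fract (z / (z * t)) ^ 2 = Int.fract (1 / t) ^ 2 := by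
    intro t
    rw [← div_div, div_self hz.ne']
  constructor
  · have := (integrableOn_Ioi_comp_mul_left_iff (fun t : ℝ => Int.fract (z / t) ^ 2) 0 hz)
    rw [mul_zero] at this
    refine this.mp ?_
    simpa only [key] using Cint
  · have h := integral_comp_mul_left_Ioi (fun t : ℝ => Int.fract (z / t) ^ 2) 0 hz
    rw [mul_zero] at h
    simp only [key, smul_eq_mul] at h
    rw [h]
    rw [← mul_assoc, mul_inv_cancel₀ hz.ne', one_mul]

/-- for a nonnegative integrable random variable `Z`, the function
`t ↦ E[{Z/t}]` is square integrable on `(0,∞)`, with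
`∫₀^∞ (E[{Z/t}])² dt ≤ E[Z] · ∫₀^∞ {1/t}² dt`. -/
theorem stmt2 {Ω : Type*} [MeasurableSpace Ω] (μ : Measure Ω) [IsProbabilityMeasure μ]
    (Z : Ω → ℝ) (hZpos : ∀ ω, 0 ≤ Z ω) (hZint : Integrable Z μ) :
    MemLp (fun t : ℝ => ∫ ω, Int.fract (Z ω / t) ∂μ) 2 (volume.restrict (Ioi 0)) ∧
    ∫ t in Ioi (0 : ℝ), (∫ ω, Int.fract (Z ω / t) ∂μ) ^ 2 ≤
      (∫ ω, Z ω ∂μ) * ∫ t in Ioi (0 : ℝ), Int.fract (1 / t) ^ 2 := by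
  classical
  -- measurable nonneg representative
  set g : Ω → ℝ := fun ω => max (hZint.1.mk Z ω) 0 with hgdef
  have hgmeas : Measurable g :=
    hZint.1.stronglyMeasurable_mk.measurable.max measurable_const
  have hgae : g =ᵐ[μ] Z := by
    filter_upwards [hZint.1.ae_eq_mk] with ω h
    simp [hgdef, ← h, max_eq_left (hZpos ω)]
  have hgpos : ∀ ω, 0 ≤ g ω := fun ω => le_max_right _ _
  have hgint : Integrable g μ := hZint.congr hgae.symm
  have hgZ : ∫ ω, Z ω ∂μ = ∫ ω, g ω ∂μ := integral_congr_ae hgae.symm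
  have hF : (fun t : ℝ => ∫ ω, Int.fract (Z ω / t) ∂μ)
      = fun t : ℝ => ∫ ω, Int.fract (g ω / t) ∂μ := by
    funext t
    exact integral_congr_ae (hgae.mono fun ω h => by simp only [h])
  set C := ∫ t in Ioi (0:ℝ), Int.fract (1 / t) ^ 2 with hCdef
  have hC0 : 0 ≤ C := integral_nonneg fun t => by positivity
  have hEg0 : 0 ≤ ∫ ω, g ω ∂μ := integral_nonneg hgpos
  set F : ℝ → ℝ := fun t => ∫ ω, Int.fract (g ω / t) ∂μ with hFdef
  have hF0 : ∀ t, 0 ≤ F t := fun t => integral_nonneg fun ω => Int.fract_nonneg _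
  -- measurability
  have hmeas2 : Measurable (fun p : ℝ × Ω => Int.fract (g p.2 / p.1)) :=
    ((hgmeas.comp measurable_snd).div measurable_fst).fract
  have hFsm : StronglyMeasurable F :=
    hmeas2.stronglyMeasurable.integral_prod_right'
  -- pointwise (in t) integrability over μ of fract²
  have hint2 : ∀ t : ℝ, Integrable (fun ω => Int.fract (g ω / t) ^ 2) μ := by
    intro t
    refine (integrable_const (1 : ℝ)).mono'
      (((hgmeas.div_const t).fract.pow_const 2).aestronglyMeasurable) ?_
    refine Filter.Eventually.of_forall fun ω => ?_
    rw [Real.norm_eq_abs, abs_of_nonneg (by positivity)]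
    nlinarith [Int.fract_nonneg (g ω / t), Int.fract_lt_one (g ω / t)]
  -- Jensen
  have jensen : ∀ t : ℝ, F t ^ 2 ≤ ∫ ω, Int.fract (g ω / t) ^ 2 ∂μ := by
    intro t
    have hmem : MemLp (fun ω => Int.fract (g ω / t)) 2 μ := by
      refine MemLp.of_bound ((hgmeas.div_const t).fract).aestronglyMeasurable 1 ?_
      refine Filter.Eventually.of_forall fun ω => ?_
      rw [Real.norm_eq_abs, abs_of_nonneg (Int.fract_nonneg _)]
      exact (Int.fract_lt_one _).le
    have hv := ProbabilityTheory.variance_nonneg (fun ω => Int.fract (g ω / t)) μ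
    rw [ProbabilityTheory.variance_eq_sub hmem] at hv
    simp only [Pi.pow_apply] at hv
    linarith
  -- lintegral chain
  set ν := volume.restrict (Ioi (0:ℝ)) with hνdef
  have step2 : ∀ t : ℝ, ENNReal.ofReal (∫ ω, Int.fract (g ω / t) ^ 2 ∂μ)
      = ∫⁻ ω, ENNReal.ofReal (Int.fract (g ω / t) ^ 2) ∂μ := fun t =>
    ofReal_integral_eq_lintegral_ofReal (hint2 t)
      (Filter.Eventually.of_forall fun ω => by positivity)
  have swap : ∫⁻ t, ∫⁻ ω, ENNReal.ofReal (Int.fract (g ω / t) ^ 2) ∂μ ∂ν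
      = ∫⁻ ω, ∫⁻ t, ENNReal.ofReal (Int.fract (g ω / t) ^ 2) ∂ν ∂μ := by
    exact lintegral_lintegral_swap
      ((hmeas2.pow_const 2).ennreal_ofReal.aemeasurable)
  have inner : ∀ ω, ∫⁻ t, ENNReal.ofReal (Int.fract (g ω / t) ^ 2) ∂ν
      = ENNReal.ofReal (g ω * C) := by
    intro ω
    rcases eq_or_lt_of_le (hgpos ω) with h0 | hpos
    · simp [← h0]
    · rw [← (scale hpos).2,
        ← ofReal_integral_eq_lintegral_ofReal (scale hpos).1
          (Filter.Eventually.of_forall fun t => by positivity)]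
  have outer : ∫⁻ ω, ENNReal.ofReal (g ω * C) ∂μ
      = ENNReal.ofReal ((∫ ω, g ω ∂μ) * C) := by
    have : ∀ ω, ENNReal.ofReal (g ω * C) = ENNReal.ofReal (g ω) * ENNReal.ofReal C :=
      fun ω => ENNReal.ofReal_mul (hgpos ω)
    simp only [this]
    rw [lintegral_mul_const _ hgmeas.ennreal_ofReal,
      ← ofReal_integral_eq_lintegral_ofReal hgint (Filter.Eventually.of_forall hgpos),
      ← ENNReal.ofReal_mul hEg0]
  have L_le : ∫⁻ t, ENNReal.ofReal (F t ^ 2) ∂ν ≤ ENNReal.ofReal ((∫ ω, g ω ∂μ) * C) := by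
    calc ∫⁻ t, ENNReal.ofReal (F t ^ 2) ∂ν
        ≤ ∫⁻ t, ENNReal.ofReal (∫ ω, Int.fract (g ω / t) ^ 2 ∂μ) ∂ν :=
          lintegral_mono fun t => ENNReal.ofReal_le_ofReal (jensen t)
      _ = ∫⁻ t, ∫⁻ ω, ENNReal.ofReal (Int.fract (g ω / t) ^ 2) ∂μ ∂ν :=
          lintegral_congr fun t => step2 t
      _ = ∫⁻ ω, ∫⁻ t, ENNReal.ofReal (Int.fract (g ω / t) ^ 2) ∂ν ∂μ := swap
      _ = ∫⁻ ω, ENNReal.ofReal (g ω * C) ∂μ := lintegral_congr inner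
      _ = ENNReal.ofReal ((∫ ω, g ω ∂μ) * C) := outer
  -- Memℒp
  have hFsq_int : Integrable (fun t => F t ^ 2) ν := by
    refine ⟨(hFsm.pow 2).aestronglyMeasurable, ?_⟩
    rw [hasFiniteIntegral_iff_norm]
    have : ∀ t, ENNReal.ofReal ‖F t ^ 2‖ = ENNReal.ofReal (F t ^ 2) := fun t => by
      rw [Real.norm_eq_abs, abs_of_nonneg (sq_nonneg _)]
    simp only [this]
    exact lt_of_le_of_lt L_le ENNReal.ofReal_lt_top
  have hmem2 : MemLp F 2 ν :=
    (memLp_two_iff_integrable_sq hFsm.aestronglyMeasurable).2 hFsq_int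
  refine ⟨by rw [hF]; exact hmem2, ?_⟩
  -- final inequality
  have heq : ∫ t, F t ^ 2 ∂ν = (∫⁻ t, ENNReal.ofReal (F t ^ 2) ∂ν).toReal := by
    rw [integral_eq_lintegral_of_nonneg_ae
      (Filter.Eventually.of_forall fun t => sq_nonneg (F t))
      (hFsm.pow 2).aestronglyMeasurable]
  calc ∫ t in Ioi (0:ℝ), (∫ ω, Int.fract (Z ω / t) ∂μ) ^ 2
      = ∫ t, F t ^ 2 ∂ν :=
        integral_congr_ae (Filter.Eventually.of_forall fun t => by simp only [congrFun hF t])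
    _ = (∫⁻ t, ENNReal.ofReal (F t ^ 2) ∂ν).toReal := heq
    _ ≤ (ENNReal.ofReal ((∫ ω, g ω ∂μ) * C)).toReal :=
        ENNReal.toReal_mono ENNReal.ofReal_ne_top L_le
    _ = (∫ ω, g ω ∂μ) * C := ENNReal.toReal_ofReal (mul_nonneg hEg0 hC0)
    _ = (∫ ω, Z ω ∂μ) * C := by rw [hgZ]
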